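/- If a k (π k) * a (τ⁻¹ (π k)) (π k) > 0 for every k : Fin n, then the only absolute nilpotent element of E^n_{π,τ} is x = 0 (regardless of the rank of the matrix of structural constants). -/

import Mathlib

/-- The product of the evolution algebra `E_{π,τ}(a)` on a finite type `ι`. -/
noncomputable def evolMul {ι : Type*} [Fintype ι] [DecidableEq ι]
    (π τ : Equiv.Perm ι) (a : ι → ι → ℝ) (x y : ι → ℝ) : ι → ℝ :=
  fun j => ∑ i, x i * y i *
    ((if π i = j then a i (π i) else 0) + (if τ i = j then a i (τ i) else 0))

/-- if `a k (π k) * a (τ⁻¹ (π k)) (π k) > 0` for all `k`, then the only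
absolute nilpotent element of `E^n_{π,τ}` is `x = 0`. -/
theorem stmt_5 (n : ℕ) (π τ : Equiv.Perm (Fin n)) (a : Fin n → Fin n → ℝ)
    (ha : ∀ k : Fin n, 0 < a k (π k) * a (τ⁻¹ (π k)) (π k)) :
    ∀ x : Fin n → ℝ, evolMul π τ a x x = 0 → x = 0 := by
  intro x hx
  have key : ∀ j : Fin n, x (π⁻¹ j) * x (π⁻¹ j) * a (π⁻¹ j) (π (π⁻¹ j))
      + x (τ⁻¹ j) * x (τ⁻¹ j) * a (τ⁻¹ j) (τ (τ⁻¹ j)) = 0 := by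
    intro j
    have h := congrFun hx j
    simp only [evolMul, Pi.zero_apply, mul_add, Finset.sum_add_distrib] at h
    rw [show (∑ i, x i * x i * (if π i = j then a i (π i) else 0))
        = x (π⁻¹ j) * x (π⁻¹ j) * a (π⁻¹ j) (π (π⁻¹ j)) by
      rw [Finset.sum_eq_single (π⁻¹ j)]
      · simp
      · intro b _ hb
        rw [if_neg, mul_zero]
        intro hbj
        exact hb (by simp [← hbj])
      · simp] at h
    rw [show (∑ i, x i * x i * (if τ i = j then a i (τ i) else 0))
        = x (τ⁻¹ j) * x (τ⁻¹ j) * a (τ⁻¹ j) (τ (τ⁻¹ j)) by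
      rw [Finset.sum_eq_single (τ⁻¹ j)]
      · simp
      · intro b _ hb
        rw [if_neg, mul_zero]
        intro hbj
        exact hb (by simp [← hbj])
      · simp] at h
    exact h
  funext k
  have hk := key (π k)
  simp only [show ∀ (f : Equiv.Perm (Fin n)) (y : Fin n), f⁻¹ (f y) = y from fun f y => by simp,
    show ∀ (f : Equiv.Perm (Fin n)) (y : Fin n), f (f⁻¹ y) = y from fun f y => by simp] at hk
  have hpos := ha k
  have hxx : x k * x k = 0 := by
    rcases mul_pos_iff.mp hpos with ⟨hc, hd⟩ | ⟨hc, hd⟩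
    · nlinarith [mul_self_nonneg (x k), mul_self_nonneg (x (τ⁻¹ (π k)))]
    · nlinarith [mul_self_nonneg (x k), mul_self_nonneg (x (τ⁻¹ (π k)))]
  simpa using mul_self_eq_zero.mp hxx
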